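/- In ℂ³, let ω = e^{2πi/3}, let X be the cyclic shift matrix sending the standard basis vector e_r to e_{r+1 mod 3}, let Z = diag(1, ω, ω²), and for t ∈ ℝ let ψ(t) = (0, 1, −e^{it})/√2. Then for all t ∈ ℝ, the nine unit vectors X^j Z^k ψ(t) for j, k ∈ {0, 1, 2} satisfy |⟨X^j Z^k ψ(t), X^{j'} Z^{k'} ψ(t)⟩|² = 1/4 whenever (j, k) ≠ (j', k'); consequently the nine rank-one projectors Π_{jk}(t) = X^j Z^k |ψ(t)⟩⟨ψ(t)| (X^j Z^k)† form a SIC in dimension 3, i.e., tr(Π_{jk}(t) Π_{j'k'}(t)) = (3·δ_{(jk),(j'k')} + 1)/4. -/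

import Mathlib

open Matrix

/-- The cyclic shift matrix on `ℂ³`, sending `e_r` to `e_{r+1 mod 3}`. -/
noncomputable def Xshift : Matrix (Fin 3) (Fin 3) ℂ :=
  fun r c => if r = c + 1 then 1 else 0

/-- The phase matrix `Z = diag(1, ω, ω²)` with `ω = e^{2πi/3}`. -/
noncomputable def Zphase : Matrix (Fin 3) (Fin 3) ℂ :=
  Matrix.diagonal fun r => Complex.exp (2 * (Real.pi : ℂ) * Complex.I / 3) ^ (r : ℕ)

/-- The fiducial vector `ψ(t) = (0, 1, −e^{it})/√2`. -/
noncomputable def fiducial (t : ℝ) : Fin 3 → ℂ :=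
  fun i => ![0, 1, -Complex.exp ((t : ℂ) * Complex.I)] i / (Real.sqrt 2 : ℂ)

/-- The Heisenberg–Weyl orbit vector `X^j Z^k ψ(t)`. -/
noncomputable def sicVec (t : ℝ) (j k : Fin 3) : Fin 3 → ℂ :=
  (Xshift ^ (j : ℕ) * Zphase ^ (k : ℕ)).mulVec (fiducial t)

/-- The rank-one projector `Π_{jk}(t) = X^j Z^k |ψ(t)⟩⟨ψ(t)| (X^j Z^k)†`. -/
noncomputable def sicProj (t : ℝ) (j k : Fin 3) : Matrix (Fin 3) (Fin 3) ℂ :=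
  Matrix.vecMulVec (sicVec t j k) (star (sicVec t j k))

set_option maxHeartbeats 4000000

/-- For every `t`, the nine unit vectors `X^j Z^k ψ(t)` have pairwise squared
overlaps `1/4`, and hence the projectors `Π_{jk}(t)` form a SIC in dimension 3:
`tr(Π_{jk}(t) Π_{j'k'}(t)) = (3·δ + 1)/4`. -/
theorem stmt_19 (t : ℝ) :
    (∀ j k : Fin 3, ∑ i, ‖sicVec t j k i‖ ^ 2 = 1) ∧
    (∀ j k j' k' : Fin 3, (j, k) ≠ (j', k') →
      ‖∑ i, (starRingEnd ℂ) (sicVec t j k i) * sicVec t j' k' i‖ ^ 2 = 1 / 4) ∧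
    (∀ j k j' k' : Fin 3,
      (sicProj t j k * sicProj t j' k').trace =
        (3 * (if (j, k) = (j', k') then 1 else 0) + 1) / 4) := by
  set ω := Complex.exp (2 * (Real.pi : ℂ) * Complex.I / 3) with hw
  set E := Complex.exp ((t:ℂ) * Complex.I) with hE
  set c : ℂ := ((Real.sqrt 2 : ℝ) : ℂ)⁻¹ with hc
  have harg : 2 * (Real.pi : ℂ) * Complex.I / 3 = ((2 * Real.pi / 3 : ℝ) : ℂ) * Complex.I := by
    push_cast; ring
  have hw3 : ω ^ 3 = 1 := by
    rw [hw, ← Complex.exp_nat_mul]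
    rw [show (3:ℕ) * (2 * (Real.pi : ℂ) * Complex.I / 3) = 2 * Real.pi * Complex.I by
      push_cast; ring]
    exact Complex.exp_two_pi_mul_I
  have hwne : ω ≠ 1 := by
    intro h
    have h1 : ω.re = Real.cos (2 * Real.pi / 3) := by
      rw [hw, harg]; exact Complex.exp_ofReal_mul_I_re _
    rw [h] at h1
    rw [show 2 * Real.pi / 3 = Real.pi - Real.pi/3 by ring, Real.cos_pi_sub,
      Real.cos_pi_div_three] at h1
    norm_num at h1
  have hwsum : ω ^ 2 = -1 - ω := by
    have h0 : (ω - 1) * (ω^2 + ω + 1) = 0 := by linear_combination hw3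
    rcases mul_eq_zero.1 h0 with h | h
    · exact absurd (by linear_combination h) hwne
    · linear_combination h
  have hw0 : ω ≠ 0 := Complex.exp_ne_zero _
  have hw4 : ω ^ 4 = ω := by rw [show 4 = 3+1 from rfl, pow_succ, hw3, one_mul]
  have hw5 : ω ^ 5 = ω^2 := by rw [show 5 = 3+2 from rfl, pow_add, hw3, one_mul]
  have hw6 : ω ^ 6 = 1 := by rw [show 6 = 3*2 from rfl, pow_mul, hw3, one_pow]
  have hw7 : ω ^ 7 = ω := by rw [show 7 = 6+1 from rfl, pow_succ, hw6, one_mul]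
  have hw8 : ω ^ 8 = ω^2 := by rw [show 8 = 6+2 from rfl, pow_add, hw6, one_mul]
  have hw9 : ω ^ 9 = 1 := by rw [show 9 = 3*3 from rfl, pow_mul, hw3, one_pow]
  have hw10 : ω ^ 10 = ω := by rw [show 10 = 9+1 from rfl, pow_succ, hw9, one_mul]
  have hw11 : ω ^ 11 = ω^2 := by rw [show 11 = 9+2 from rfl, pow_add, hw9, one_mul]
  have hw12 : ω ^ 12 = 1 := by rw [show 12 = 3*4 from rfl, pow_mul, hw3, one_pow]
  have hw13 : ω ^ 13 = ω := by rw [show 13 = 12+1 from rfl, pow_succ, hw12, one_mul]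
  have hw14 : ω ^ 14 = ω^2 := by rw [show 14 = 12+2 from rfl, pow_add, hw12, one_mul]
  have hw15 : ω ^ 15 = 1 := by rw [show 15 = 3*5 from rfl, pow_mul, hw3, one_pow]
  have hw16 : ω ^ 16 = ω := by rw [show 16 = 15+1 from rfl, pow_succ, hw15, one_mul]
  have hw17 : ω ^ 17 = ω^2 := by rw [show 17 = 15+2 from rfl, pow_add, hw15, one_mul]
  have hw18 : ω ^ 18 = 1 := by rw [show 18 = 3*6 from rfl, pow_mul, hw3, one_pow]
  have hw19 : ω ^ 19 = ω := by rw [show 19 = 18+1 from rfl, pow_succ, hw18, one_mul]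
  have hw20 : ω ^ 20 = ω^2 := by rw [show 20 = 18+2 from rfl, pow_add, hw18, one_mul]
  have hw21 : ω ^ 21 = 1 := by rw [show 21 = 3*7 from rfl, pow_mul, hw3, one_pow]
  have hw22 : ω ^ 22 = ω := by rw [show 22 = 21+1 from rfl, pow_succ, hw21, one_mul]
  have hw23 : ω ^ 23 = ω^2 := by rw [show 23 = 21+2 from rfl, pow_add, hw21, one_mul]
  have hw24 : ω ^ 24 = 1 := by rw [show 24 = 3*8 from rfl, pow_mul, hw3, one_pow]
  have hcw : (starRingEnd ℂ) ω = ω ^ 2 := by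
    have h1 : (starRingEnd ℂ) ω * ω = 1 := by
      rw [hw, harg, ← Complex.exp_conj, ← Complex.exp_add]
      rw [show (starRingEnd ℂ) (((2 * Real.pi / 3 : ℝ) : ℂ) * Complex.I) +
          ((2 * Real.pi / 3 : ℝ) : ℂ) * Complex.I = 0 by
        simp only [_root_.map_mul, map_div₀, map_ofNat, Complex.conj_ofReal, Complex.conj_I]
        ring]
      exact Complex.exp_zero
    have h2 : ω ^ 2 * ω = 1 := by rw [← pow_succ]; exact hw3
    exact mul_right_cancel₀ hw0 (h1.trans h2.symm)
  have hE0 : E ≠ 0 := Complex.exp_ne_zero _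
  have hcE : (starRingEnd ℂ) E = E⁻¹ := by
    rw [hE, ← Complex.exp_conj, ← Complex.exp_neg]
    congr 1
    simp [Complex.conj_ofReal, Complex.conj_I]
  have hs0 : ((Real.sqrt 2 : ℝ) : ℂ) ≠ 0 := by norm_cast; positivity
  have hs2 : ((Real.sqrt 2 : ℝ) : ℂ) ^ 2 = 2 := by
    norm_cast; exact Real.sq_sqrt (by norm_num)
  have hs3 : ((Real.sqrt 2 : ℝ) : ℂ) ^ 3 = 2 * ((Real.sqrt 2 : ℝ) : ℂ) := by
    rw [pow_succ, hs2]
  have hs4 : ((Real.sqrt 2 : ℝ) : ℂ) ^ 4 = 4 := by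
    rw [show 4 = 2+2 from rfl, pow_add, hs2]; norm_num
  have hi2 : ((Real.sqrt 2 : ℝ) : ℂ)⁻¹ ^ 2 = 2⁻¹ := by rw [inv_pow, hs2]
  have hi4 : ((Real.sqrt 2 : ℝ) : ℂ)⁻¹ ^ 4 = 4⁻¹ := by rw [inv_pow, hs4]
  have hcc : (starRingEnd ℂ) c = c := by rw [hc, map_inv₀, Complex.conj_ofReal]
  -- explicit form of Xshift and Zphase
  have hXe : Xshift = !![0,0,1;1,0,0;0,1,0] := by
    ext r s
    fin_cases r <;> fin_cases s <;> simp [Xshift, Matrix.vecHead, Matrix.vecTail]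
  have hZe : Zphase = !![1,0,0;0,ω,0;0,0,ω^2] := by
    ext r s
    fin_cases r <;> fin_cases s <;>
      simp [Zphase, Matrix.diagonal, Matrix.vecHead, Matrix.vecTail] <;> rfl
  have hX2 : Xshift ^ 2 = !![0,1,0;0,0,1;1,0,0] := by
    rw [pow_two, hXe, Matrix.mul_fin_three]; norm_num
  have hZ2 : Zphase ^ 2 = !![1,0,0;0,ω^2,0;0,0,ω^4] := by
    rw [pow_two, hZe, Matrix.mul_fin_three]; norm_num; exact ⟨by ring, by ring⟩
  -- explicit form of the nine vectors
  have hvec : ∀ j k : Fin 3, sicVec t j k =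
      ![![![0, c, -(E*c)], ![0, ω*c, -(ω^2*E*c)], ![0, ω^2*c, -(ω^4*E*c)]],
        ![![-(E*c), 0, c], ![-(ω^2*E*c), 0, ω*c], ![-(ω^4*E*c), 0, ω^2*c]],
        ![![c, -(E*c), 0], ![ω*c, -(ω^2*E*c), 0], ![ω^2*c, -(ω^4*E*c), 0]]] j k := by
    intro j k
    funext i
    fin_cases j <;> fin_cases k <;> fin_cases i <;>
      simp [sicVec, hXe, hZe, hX2, hZ2, pow_succ, Matrix.mul_fin_three, fiducial,
        Matrix.mulVec, dotProduct, Fin.sum_univ_three, div_eq_mul_inv, ← hw, ← hE, ← hc] <;> ring_nf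
  -- the diagonal overlaps
  have key1 : ∀ j k : Fin 3,
      (∑ i, (starRingEnd ℂ) (sicVec t j k i) * sicVec t j k i) = 1 := by
    intro j k
    fin_cases j <;> fin_cases k <;>
    · simp only [hvec]
      simp [Fin.sum_univ_three, _root_.map_mul, map_neg, map_pow, hcw, hcE, hcc, hc]
      field_simp
      ring_nf
      simp only [hw3, hw4, hw5, hw6, hw7, hw8, hw9, hw10, hw11, hw12, hw13, hw14, hw15, hw16, hw17, hw18, hw19, hw20, hw21, hw22, hw23, hw24,
        hwsum, hi2, hi4, hs2, hs3, hs4]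
      all_goals ring_nf
  -- the off-diagonal overlaps
  have key2 : ∀ j k j' k' : Fin 3, (j, k) ≠ (j', k') →
      (∑ i, (starRingEnd ℂ) (sicVec t j k i) * sicVec t j' k' i) *
      (∑ i, (starRingEnd ℂ) (sicVec t j' k' i) * sicVec t j k i) = 1/4 := by
    intro j k j' k' hne
    fin_cases j <;> fin_cases k <;> fin_cases j' <;> fin_cases k' <;>
    first
    | exact absurd rfl hne
    | · simp only [hvec]
        simp [Fin.sum_univ_three, _root_.map_mul, map_neg, map_pow, hcw, hcE, hcc, hc]
        field_simp
        ring_nf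
        simp only [hw3, hw4, hw5, hw6, hw7, hw8, hw9, hw10, hw11, hw12, hw13, hw14, hw15, hw16, hw17, hw18, hw19, hw20, hw21, hw22, hw23, hw24,
          hwsum, hi2, hi4, hs2, hs3, hs4]
        all_goals ring_nf
  -- conjugate of an overlap is the reversed overlap
  have hconj : ∀ j k j' k' : Fin 3,
      (starRingEnd ℂ) (∑ i, (starRingEnd ℂ) (sicVec t j k i) * sicVec t j' k' i) =
      ∑ i, (starRingEnd ℂ) (sicVec t j' k' i) * sicVec t j k i := by
    intro j k j' k'
    rw [map_sum]
    exact Finset.sum_congr rfl fun i _ => by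
      rw [_root_.map_mul, Complex.conj_conj, mul_comm]
  refine ⟨?_, ?_, ?_⟩
  · intro j k
    have h := key1 j k
    have h2 : ((∑ i, ‖sicVec t j k i‖ ^ 2 : ℝ) : ℂ) =
        ∑ i, (starRingEnd ℂ) (sicVec t j k i) * sicVec t j k i := by
      push_cast
      refine Finset.sum_congr rfl fun i _ => ?_
      rw [mul_comm, Complex.mul_conj, Complex.normSq_eq_norm_sq]
      push_cast
      ring
    rw [h] at h2
    exact_mod_cast h2
  · intro j k j' k' hne
    have h := key2 j k j' k' hne
    have h2 : ((‖∑ i, (starRingEnd ℂ) (sicVec t j k i) * sicVec t j' k' i‖ ^ 2 : ℝ) : ℂ)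
        = 1/4 := by
      rw [← Complex.normSq_eq_norm_sq, ← Complex.mul_conj, hconj, h]
    rw [show (1/4 : ℂ) = ((1/4 : ℝ) : ℂ) by norm_num] at h2
    exact_mod_cast h2
  · intro j k j' k'
    have htr : (sicProj t j k * sicProj t j' k').trace =
        (∑ i, (starRingEnd ℂ) (sicVec t j k i) * sicVec t j' k' i) *
        (∑ i, (starRingEnd ℂ) (sicVec t j' k' i) * sicVec t j k i) := by
      simp [sicProj, Matrix.trace, Matrix.diag, Matrix.mul_apply, Matrix.vecMulVec_apply,
        Fin.sum_univ_three, Pi.star_apply, Complex.star_def]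
      ring
    by_cases h : (j, k) = (j', k')
    · injection h with h1 h2
      subst h1; subst h2
      rw [htr, key1 j k, if_pos rfl]
      norm_num
    · rw [htr, key2 j k j' k' h, if_neg h]
      norm_num
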